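/- For every positive integer n, the number of 2-Stirling permutations of size n equals the double factorial (2n−1)!! = 1·3·5⋯(2n−1). -/

import Mathlib

/-- `π` is a `b`-Stirling permutation of size `n`: a sequence of length `b*n`
over `{1,…,n}` in which every value appears exactly `b` times, and whenever a
value occurs between two occurrences of a value `i`, it is `≥ i`. -/
def IsStirling (b n : ℕ) (π : List ℕ) : Prop :=
  π.length = b * n ∧
  (∀ v, 1 ≤ v → v ≤ n → π.count v = b) ∧
  (∀ v, v ∈ π → 1 ≤ v ∧ v ≤ n) ∧
  ∀ p q r : Fin π.length, p < q → q < r → π.get p = π.get r → π.get p ≤ π.get q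

open List

/-- The Fin-index condition is equivalent to a sublist condition. -/
lemma stir_cond_iff (l : List ℕ) :
    (∀ p q r : Fin l.length, p < q → q < r → l.get p = l.get r → l.get p ≤ l.get q) ↔
    (∀ x y : ℕ, [x, y, x] <+ l → x ≤ y) := by
  constructor
  · intro h x y hsub
    obtain ⟨is, hmap, hp⟩ := List.sublist_eq_map_getElem hsub
    rcases is with _ | ⟨p, _ | ⟨q, _ | ⟨r, _ | ⟨s, t⟩⟩⟩⟩ <;> simp at hmap
    obtain ⟨h1, h2, h3⟩ := hmap
    rw [← List.get_eq_getElem] at h1 h2 h3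
    simp only [List.pairwise_cons, List.mem_cons, List.mem_singleton] at hp
    have hpq : p < q := hp.1 q (Or.inl rfl)
    have hqr : q < r := hp.2.1 r (Or.inl rfl)
    have := h p q r hpq hqr (by rw [← h1, ← h3])
    rw [← h1, ← h2] at this; exact this
  · intro h p q r hpq hqr heq
    have hpair : List.Pairwise (fun a b : Fin l.length => (a : ℕ) < (b : ℕ)) [p, q, r] := by
      simp only [List.pairwise_cons, List.mem_cons, List.mem_singleton]
      refine ⟨?_, ?_, ?_⟩
      · rintro a (rfl | rfl | h') <;> first
          | exact hpq
          | exact lt_trans hpq hqr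
          | simp_all
      · rintro a (rfl | h') <;> first | exact hqr | simp_all
      · simp
    have hsub : [l.get p, l.get q, l.get r] <+ l := List.map_getElem_sublist hpair
    rw [← heq] at hsub
    exact h _ _ hsub

lemma count_one_split {a : ℕ} : ∀ {l : List ℕ}, l.count a = 1 →
    ∃ C B, l = C ++ a :: B ∧ a ∉ C ∧ a ∉ B
  | [], h => by simp at h
  | x :: t, h => by
    by_cases hx : x = a
    · subst hx
      have ht : t.count x = 0 := by
        have := List.count_cons_self (a := x) (l := t); omega
      exact ⟨[], t, by simp, by simp, List.count_eq_zero.1 ht⟩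
    · have ht : t.count a = 1 := by
        rw [List.count_cons_of_ne hx] at h; exact h
      obtain ⟨C, B, rfl, hC, hB⟩ := count_one_split ht
      exact ⟨x :: C, B, rfl, by
        simp only [List.mem_cons, not_or]; exact ⟨fun h' => hx h'.symm, hC⟩, hB⟩

lemma count_two_split {a : ℕ} : ∀ {l : List ℕ}, l.count a = 2 →
    ∃ A C B, l = A ++ a :: (C ++ a :: B) ∧ a ∉ A ∧ a ∉ C ∧ a ∉ B
  | [], h => by simp at h
  | x :: t, h => by
    by_cases hx : x = a
    · subst hx
      have ht : t.count x = 1 := by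
        have := List.count_cons_self (a := x) (l := t); omega
      obtain ⟨C, B, rfl, hC, hB⟩ := count_one_split ht
      exact ⟨[], C, B, by simp, by simp, hC, hB⟩
    · have ht : t.count a = 2 := by
        rw [List.count_cons_of_ne hx] at h; exact h
      obtain ⟨A, C, B, rfl, hA, hC, hB⟩ := count_two_split ht
      exact ⟨x :: A, C, B, rfl, by
        simp only [List.mem_cons, not_or]; exact ⟨fun h' => hx h'.symm, hA⟩, hC, hB⟩

lemma first_occ_unique {a : ℕ} : ∀ {A A' t t' : List ℕ},
    A ++ a :: t = A' ++ a :: t' → a ∉ A → a ∉ A' → A = A' ∧ t = t'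
  | [], [], t, t', h, _, _ => by simpa using h
  | [], x :: A', t, t', h, _, hA' => by
    simp only [List.nil_append, List.cons_append, List.cons.injEq] at h
    obtain ⟨rfl, -⟩ := h
    simp at hA'
  | x :: A, [], t, t', h, hA, _ => by
    simp only [List.nil_append, List.cons_append, List.cons.injEq] at h
    obtain ⟨rfl, -⟩ := h
    simp at hA
  | x :: A, x' :: A', t, t', h, hA, hA' => by
    simp only [List.cons_append, List.cons.injEq] at h
    obtain ⟨rfl, h2⟩ := h
    have := first_occ_unique h2 (fun hm => hA (List.mem_cons_of_mem _ hm))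
      (fun hm => hA' (List.mem_cons_of_mem _ hm))
    exact ⟨by rw [this.1], this.2⟩

lemma sublist_no_n {n : ℕ} {A B s : List ℕ} (h : s <+ A ++ n :: n :: B) (hs : n ∉ s) :
    s <+ A ++ B := by
  rw [show A ++ n :: n :: B = A ++ ([n, n] ++ B) by simp] at h
  rw [List.sublist_append_iff] at h
  obtain ⟨s1, s2, rfl, h1, h2⟩ := h
  rw [List.sublist_append_iff] at h2
  obtain ⟨s3, s4, rfl, h3, h4⟩ := h2
  have hs3 : s3 = [] := by
    rw [List.eq_nil_iff_forall_not_mem]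
    intro x hx
    have hxn : x = n := by simpa using h3.subset hx
    subst hxn
    exact hs (by simp [hx])
  subst hs3
  simpa using List.Sublist.append h1 h4

lemma no_nxn {n : ℕ} {A B : List ℕ} (hA : n ∉ A) (hB : n ∉ B) {y : ℕ}
    (h : [n, y, n] <+ A ++ n :: n :: B) : False := by
  rw [show A ++ n :: n :: B = A ++ ([n, n] ++ B) by simp] at h
  rw [List.sublist_append_iff] at h
  obtain ⟨s1, s2, heq, h1, h2⟩ := h
  rw [List.sublist_append_iff] at h2
  obtain ⟨s3, s4, heq2, h3, h4⟩ := h2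
  have hns1 : n ∉ s1 := fun hm => hA (h1.subset hm)
  have hns4 : n ∉ s4 := fun hm => hB (h4.subset hm)
  subst heq2
  rcases s1 with _ | ⟨a, s1⟩
  · simp only [List.nil_append] at heq
    rcases s3 with _ | ⟨b, s3⟩
    · simp only [List.nil_append] at heq
      exact hns4 (heq ▸ by simp)
    · rcases s3 with _ | ⟨c, s3⟩
      · simp only [List.cons_append, List.nil_append, List.cons.injEq] at heq
        exact hns4 (heq.2 ▸ by simp)
      · rcases s3 with _ | ⟨d, s3⟩
        · simp only [List.cons_append, List.nil_append, List.cons.injEq] at heq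
          obtain ⟨rfl, rfl, heq⟩ := heq
          -- s4 = [n], contradiction
          exact hns4 (heq ▸ by simp)
        · have := h3.length_le; simp at this
  · simp only [List.cons_append, List.cons.injEq] at heq
    exact hns1 (heq.1 ▸ by simp)

lemma mem_le_of_stirling {n : ℕ} {l : List ℕ} (hl : IsStirling 2 n l) {v : ℕ}
    (hv : v ∈ l) : 1 ≤ v ∧ v ≤ n := hl.2.2.1 v hv
lemma not_mem_of_stirling_pred {n : ℕ} (hn : 0 < n) {l : List ℕ}
    (hl : IsStirling 2 (n - 1) l) : n ∉ l := fun hm => by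
  have := hl.2.2.1 n hm; omega

/-- Inserting `n n` at position `k` in a Stirling permutation of size `n-1`
gives a Stirling permutation of size `n`. -/
lemma insert_stirling {n : ℕ} (hn : 0 < n) {l : List ℕ} (hl : IsStirling 2 (n - 1) l)
    {k : ℕ} (hk : k ≤ l.length) :
    IsStirling 2 n (l.take k ++ n :: n :: l.drop k) := by
  obtain ⟨hlen, hcount, hmem, hcond⟩ := hl
  have hnl : n ∉ l := fun hm => by have := hmem n hm; omega
  have htd : l.take k ++ l.drop k = l := List.take_append_drop k l
  refine ⟨?_, ?_, ?_, ?_⟩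
  · simp only [List.length_append, List.length_cons, List.length_take, List.length_drop]
    omega
  · intro v h1 h2
    have hsplit : l.count v = (l.take k).count v + (l.drop k).count v := by
      conv_lhs => rw [← htd]
      rw [List.count_append]
    by_cases hv : v = n
    · subst hv
      have h0 : l.count v = 0 := List.count_eq_zero.2 hnl
      have ht0 : (l.take k).count v = 0 :=
        Nat.le_zero.1 (h0 ▸ (List.take_sublist k l).count_le v)
      have hd0 : (l.drop k).count v = 0 :=
        Nat.le_zero.1 (h0 ▸ (List.drop_sublist k l).count_le v)
      simp [List.count_append, List.count_cons, ht0, hd0]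
    · have hc := hcount v h1 (by omega)
      rw [List.count_append, List.count_cons_of_ne (Ne.symm hv), List.count_cons_of_ne (Ne.symm hv)]
      omega
  · intro v hv
    simp only [List.mem_append, List.mem_cons] at hv
    rcases hv with h | rfl | rfl | h
    · have := hmem v (List.mem_of_mem_take h); omega
    · omega
    · omega
    · have := hmem v (List.mem_of_mem_drop h); omega
  · rw [stir_cond_iff]
    intro x y hsub
    by_cases hx : x = n
    · exfalso
      rw [hx] at hsub
      exact no_nxn (fun hm => hnl (List.mem_of_mem_take hm))
        (fun hm => hnl (List.mem_of_mem_drop hm)) hsub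
    · by_cases hy : y = n
      · rw [hy]
        have hxmem : x ∈ l.take k ++ n :: n :: l.drop k := hsub.subset (by simp)
        simp only [List.mem_append, List.mem_cons] at hxmem
        rcases hxmem with h | rfl | rfl | h
        · have := hmem x (List.mem_of_mem_take h); omega
        · omega
        · omega
        · have := hmem x (List.mem_of_mem_drop h); omega
      · have : [x, y, x] <+ l.take k ++ l.drop k :=
          sublist_no_n hsub (by
            intro hm
            simp only [List.mem_cons, List.not_mem_nil, or_false] at hm
            rcases hm with rfl | rfl | rfl <;> simp_all)
        rw [htd] at this
        exact (stir_cond_iff l).1 hcond x y this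

/-- Every Stirling permutation of size `n ≥ 1` decomposes as `A ++ [n,n] ++ B`. -/
lemma stirling_structure {n : ℕ} (hn : 0 < n) {π : List ℕ} (hπ : IsStirling 2 n π) :
    ∃ A B, π = A ++ n :: n :: B ∧ n ∉ A ∧ n ∉ B ∧ IsStirling 2 (n - 1) (A ++ B) := by
  obtain ⟨hlen, hcount, hmem, hcond⟩ := hπ
  have hc : π.count n = 2 := hcount n hn le_rfl
  obtain ⟨A, C, B, rfl, hA, hC, hB⟩ := count_two_split hc
  have hcond' : ∀ x y : ℕ, [x, y, x] <+ A ++ n :: (C ++ n :: B) → x ≤ y :=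
    (stir_cond_iff _).1 hcond
  have hCnil : C = [] := by
    rw [List.eq_nil_iff_forall_not_mem]
    intro c hc'
    have hsub : [n, c, n] <+ A ++ n :: (C ++ n :: B) := by
      have h1 : [c, n] <+ C ++ n :: B :=
        List.Sublist.append (List.singleton_sublist.2 hc')
          (List.singleton_sublist.2 (by simp))
      have h2 : [n, c, n] <+ n :: (C ++ n :: B) := h1.cons₂ n
      exact h2.trans (List.sublist_append_right A _)
    have hle : n ≤ c := hcond' n c hsub
    have hge : c ≤ n := (hmem c (by simp [hc'])).2
    exact hC (by rwa [le_antisymm hge hle] at hc')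
  subst hCnil
  have hlen' : (A ++ n :: n :: B).length = 2 * n := hlen
  have hcount' : ∀ v, 1 ≤ v → v ≤ n → (A ++ n :: n :: B).count v = 2 := hcount
  have hmem' : ∀ v ∈ A ++ n :: n :: B, 1 ≤ v ∧ v ≤ n := hmem
  have hcond'' : ∀ x y : ℕ, [x, y, x] <+ A ++ n :: n :: B → x ≤ y := hcond'
  refine ⟨A, B, rfl, hA, hB, ?_, ?_, ?_, ?_⟩
  · simp only [List.length_append, List.length_cons] at hlen' ⊢
    omega
  · intro v h1 h2
    have hv : v ≠ n := by omega
    have hcv := hcount' v h1 (by omega)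
    rw [List.count_append, List.count_cons_of_ne (Ne.symm hv), List.count_cons_of_ne (Ne.symm hv)] at hcv
    rw [List.count_append]
    omega
  · intro v hv
    have hvπ : v ∈ A ++ n :: n :: B := by
      simp only [List.mem_append, List.mem_cons] at hv ⊢
      rcases hv with h | h
      · exact Or.inl h
      · exact Or.inr (Or.inr (Or.inr h))
    have h1 := hmem' v hvπ
    have hvn : v ≠ n := by
      rintro rfl
      simp only [List.mem_append] at hv
      rcases hv with h | h
      exacts [hA h, hB h]
    omega
  · rw [stir_cond_iff]
    intro x y hsub
    refine hcond'' x y (hsub.trans ?_)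
    rw [List.append_sublist_append_left]
    exact (List.sublist_cons_self n B).trans (List.sublist_cons_self n (n :: B))

lemma insert_inj {n : ℕ} {l l' : List ℕ} (hl : n ∉ l) (hl' : n ∉ l')
    {k k' : ℕ} (hk : k ≤ l.length) (hk' : k' ≤ l'.length)
    (h : l.take k ++ n :: n :: l.drop k = l'.take k' ++ n :: n :: l'.drop k') :
    l = l' ∧ k = k' := by
  have h1 := first_occ_unique h (fun hm => hl (List.mem_of_mem_take hm))
    (fun hm => hl' (List.mem_of_mem_take hm))
  obtain ⟨ht, hd⟩ := h1
  simp only [List.cons.injEq, true_and] at hd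
  have hll : l = l' := by
    rw [← List.take_append_drop k l, ← List.take_append_drop k' l', ht, hd]
  constructor
  · exact hll
  · have : (l.take k).length = (l'.take k').length := by rw [ht]
    simp only [List.length_take] at this
    omega
lemma ncard_step {n : ℕ} (hn : 0 < n) :
    Set.ncard {π : List ℕ | IsStirling 2 n π}
      = (2 * n - 1) * Set.ncard {π : List ℕ | IsStirling 2 (n - 1) π} := by
  set S : Set (List ℕ) := {π | IsStirling 2 n π}
  set T : Set (List ℕ) := {π | IsStirling 2 (n - 1) π}
  have hTlen : ∀ l : List ℕ, l ∈ T → l.length = 2 * (n - 1) := fun l hl => hl.1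
  let g : T × Fin (2 * n - 1) → S := fun p =>
    ⟨(p.1 : List ℕ).take p.2 ++ n :: n :: (p.1 : List ℕ).drop p.2, by
      refine insert_stirling hn p.1.2 ?_
      have := hTlen p.1 p.1.2
      have := p.2.2
      omega⟩
  have hginj : Function.Injective g := by
    rintro ⟨⟨l, hl⟩, ⟨k, hk⟩⟩ ⟨⟨l', hl'⟩, ⟨k', hk'⟩⟩ h
    simp only [g, Subtype.mk.injEq] at h
    have h1 := insert_inj (not_mem_of_stirling_pred hn hl) (not_mem_of_stirling_pred hn hl')
      (by have := hTlen l hl; omega) (by have := hTlen l' hl'; omega) h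
    simp only [Prod.mk.injEq, Subtype.mk.injEq, Fin.mk.injEq]
    exact ⟨h1.1, h1.2⟩
  have hgsurj : Function.Surjective g := by
    rintro ⟨π, hπ⟩
    obtain ⟨A, B, rfl, hA, hB, hAB⟩ := stirling_structure hn hπ
    have hlenAB : (A ++ B).length = 2 * (n - 1) := hAB.1
    refine ⟨⟨⟨A ++ B, hAB⟩, ⟨A.length, ?_⟩⟩, ?_⟩
    · simp only [List.length_append] at hlenAB; omega
    · simp only [g, Subtype.mk.injEq]
      rw [List.take_left, List.drop_left]
  have hequiv : Nat.card S = Nat.card (T × Fin (2 * n - 1)) :=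
    (Nat.card_eq_of_bijective g ⟨hginj, hgsurj⟩).symm
  rw [← Nat.card_coe_set_eq, ← Nat.card_coe_set_eq, hequiv, Nat.card_prod]
  simp [mul_comm]

/-- the number of 2-Stirling permutations of size `n` equals the
double factorial `(2n-1)!! = 1·3·5⋯(2n-1)`. -/
theorem count_two_stirling (n : ℕ) (hn : 0 < n) :
    Set.ncard {π : List ℕ | IsStirling 2 n π} = Nat.doubleFactorial (2 * n - 1) := by
  induction n, hn using Nat.le_induction with
  | base =>
    have hset : {π : List ℕ | IsStirling 2 1 π} = {[1, 1]} := by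
      ext π
      simp only [Set.mem_setOf_eq, Set.mem_singleton_iff]
      constructor
      · rintro ⟨hlen, hcount, hmem, -⟩
        have hc : π.count 1 = 2 := hcount 1 le_rfl le_rfl
        have : ∀ b ∈ π, 1 = b := by
          intro b hb
          have := hmem b hb; omega
        have := List.count_eq_length.2 this
        rw [hc] at this
        have : π = List.replicate 2 1 := List.eq_replicate_iff.2 ⟨by omega, fun b hb => ((by
          intro b hb; have := hmem b hb; omega : ∀ b ∈ π, 1 = b) b hb).symm⟩
        simpa [List.replicate] using this
      · rintro rfl
        refine ⟨rfl, ?_, ?_, ?_⟩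
        · intro v h1 h2
          have : v = 1 := le_antisymm h2 h1
          subst this; rfl
        · intro v hv; simp at hv; omega
        · intro p q r hpq hqr _
          have hp := p.2; have hq := q.2; have hr := r.2
          simp only [List.length_cons, List.length_nil] at hp hq hr
          have : (p : ℕ) < q := hpq
          have : (q : ℕ) < r := hqr
          omega
    rw [hset, Set.ncard_singleton]
    rfl
  | succ n hn1 ih =>
    have hstep := ncard_step (n := n + 1) (by omega)
    simp only [Nat.add_sub_cancel] at hstep
    rw [hstep, ih]
    obtain ⟨m, rfl⟩ : ∃ m, n = m + 1 := ⟨n - 1, by omega⟩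
    have e1 : 2 * (m + 1 + 1) - 1 = (2 * m + 1) + 2 := by omega
    have e2 : 2 * (m + 1) - 1 = 2 * m + 1 := by omega
    rw [e1, e2, Nat.doubleFactorial_add_two]
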